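/- Let X be a finite set of distinct points in ℙ¹×ℙ¹ over k satisfying property (*). For P×Q ∈ X, let X_{P,1} be the set of points of X whose first coordinate is P and let X_{Q,2} be the set of points of X whose second coordinate is Q, and set b = |X_{P,1}| and a = |X_{Q,2}|. Then deg_X(P×Q) = {(a−1, b−1)}. -/

import Mathlib

/-- `ℙ¹` over `k`, as the projectivization of `k²`. -/
abbrev Proj1 (k : Type*) [Field k] := Projectivization k (Fin 2 → k)

/-- The bigraded coordinate ring `R = k[x₀,x₁,y₀,y₁]` of `ℙ¹ × ℙ¹`,
with the `x` variables indexed by `Sum.inl` and the `y` variables by `Sum.inr`. -/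
abbrev BiPoly (k : Type*) [Field k] := MvPolynomial (Fin 2 ⊕ Fin 2) k

variable {k : Type*} [Field k]

/-- `F` is bihomogeneous of bidegree `d = (d₁, d₂)`: every monomial of `F` has total degree
`d₁` in `x₀,x₁` and total degree `d₂` in `y₀,y₁`. -/
def IsBihomogeneous (F : BiPoly k) (d : ℕ × ℕ) : Prop :=
  ∀ m ∈ F.support,
    (∑ i : Fin 2, m (Sum.inl i)) = d.1 ∧ (∑ i : Fin 2, m (Sum.inr i)) = d.2

/-- `F` vanishes at the point `P` of `ℙ¹ × ℙ¹`, i.e. at every pair of representatives. -/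
def VanishesAt (F : BiPoly k) (P : Proj1 k × Proj1 k) : Prop :=
  ∀ (p q : Fin 2 → k) (hp : p ≠ 0) (hq : q ≠ 0),
    Projectivization.mk k p hp = P.1 → Projectivization.mk k q hq = P.2 →
    MvPolynomial.eval (Sum.elim p q) F = 0

/-- `F` is a separator of `P` in `X` of bidegree `d`: it is bihomogeneous of bidegree `d`,
does not vanish at `P`, and vanishes at every other point of `X`. -/
def IsSeparator (X : Finset (Proj1 k × Proj1 k)) (P : Proj1 k × Proj1 k)
    (F : BiPoly k) (d : ℕ × ℕ) : Prop :=
  IsBihomogeneous F d ∧ ¬ VanishesAt F P ∧ ∀ Q ∈ X, Q ≠ P → VanishesAt F Q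

/-- The set of bidegrees of separators of `P` in `X`. -/
def sepDegrees (X : Finset (Proj1 k × Proj1 k)) (P : Proj1 k × Proj1 k) : Set (ℕ × ℕ) :=
  {d | ∃ F : BiPoly k, IsSeparator X P F d}

/-- `deg_X(P)`: the set of minimal elements, with respect to the componentwise partial
order on `ℕ × ℕ`, of the set of bidegrees of separators of `P` in `X`. -/
def degSet (X : Finset (Proj1 k × Proj1 k)) (P : Proj1 k × Proj1 k) : Set (ℕ × ℕ) :=
  {d | d ∈ sepDegrees X P ∧ ∀ e ∈ sepDegrees X P, e ≤ d → e = d}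

/-- The ideal `I_X` of all polynomials vanishing at (every representative of)
every point of `X`. -/
noncomputable def vanishingIdeal (X : Finset (Proj1 k × Proj1 k)) : Ideal (BiPoly k) where
  carrier := {F | ∀ P ∈ X, VanishesAt F P}
  zero_mem' := by
    intro P _ p q hp hq _ _
    simp
  add_mem' := by
    intro F G hF hG P hP p q hp hq h1 h2
    have h := hF P hP p q hp hq h1 h2
    have h' := hG P hP p q hp hq h1 h2
    simp [h, h']
  smul_mem' := by
    intro c F hF P hP p q hp hq h1 h2
    have h := hF P hP p q hp hq h1 h2
    simp [smul_eq_mul, h]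

/-- Property (*): whenever `P×Q, P'×Q' ∈ X` with `P ≠ P'` and `Q ≠ Q'`, at least one of
`P×Q'` and `P'×Q` is in `X`. -/
def PropertyStar (X : Finset (Proj1 k × Proj1 k)) : Prop :=
  ∀ P Q P' Q' : Proj1 k, (P, Q) ∈ X → (P', Q') ∈ X → P ≠ P' → Q ≠ Q' →
    (P, Q') ∈ X ∨ (P', Q) ∈ X

/-- The depth of a commutative ring `A` with respect to an ideal `m`: the supremum of the
lengths of regular sequences on `A` consisting of elements of `m`. -/
noncomputable def depthWrt (A : Type*) [CommRing A] (m : Ideal A) : ℕ :=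
  sSup {n | ∃ rs : List A, rs.length = n ∧ (∀ r ∈ rs, r ∈ m) ∧
    RingTheory.Sequence.IsRegular A rs}

/-- The irrelevant maximal ideal `(x₀,x₁,y₀,y₁)` of `R/I_X`. -/
noncomputable def irrelevantIdeal (X : Finset (Proj1 k × Proj1 k)) :
    Ideal (BiPoly k ⧸ vanishingIdeal X) :=
  (Ideal.span (Set.range (MvPolynomial.X : (Fin 2 ⊕ Fin 2) → BiPoly k))).map
    (Ideal.Quotient.mk (vanishingIdeal X))

/-- `X` is arithmetically Cohen–Macaulay: `depth (R/I_X) = 2`. -/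
def IsACM (X : Finset (Proj1 k × Proj1 k)) : Prop :=
  depthWrt (BiPoly k ⧸ vanishingIdeal X) (irrelevantIdeal X) = 2

open Classical in
/-- The number of points of `X` with first coordinate `P` (the cardinality of `X_{P,1}`). -/
noncomputable def fiber1Card (X : Finset (Proj1 k × Proj1 k)) (P : Proj1 k) : ℕ :=
  (X.filter fun T => T.1 = P).card

open Classical in
/-- The number of points of `X` with second coordinate `Q` (the cardinality of `X_{Q,2}`). -/
noncomputable def fiber2Card (X : Finset (Proj1 k × Proj1 k)) (Q : Proj1 k) : ℕ :=
  (X.filter fun T => T.2 = Q).card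

open Classical in
/-- The number of distinct first coordinates of points of `X`, i.e. `|π₁(X)|`. -/
noncomputable def proj1Card (X : Finset (Proj1 k × Proj1 k)) : ℕ :=
  (X.image Prod.fst).card

open Classical in
/-- The number of distinct second coordinates of points of `X`, i.e. `|π₂(X)|`. -/
noncomputable def proj2Card (X : Finset (Proj1 k × Proj1 k)) : ℕ :=
  (X.image Prod.snd).card

section AuxStarProof

variable {k : Type*} [Field k]

/-- 2x2 determinant of a pair of vectors in `k²`. -/
private def det2 (v w : Fin 2 → k) : k := v 0 * w 1 - v 1 * w 0

private lemma ne_zero_cases {v : Fin 2 → k} (hv : v ≠ 0) : v 0 ≠ 0 ∨ v 1 ≠ 0 := by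
  by_contra h
  push_neg at h
  exact hv (funext fun i => by fin_cases i <;> simp [h.1, h.2])

private lemma mk_eq_of_det2 {v w : Fin 2 → k} (hv : v ≠ 0) (hw : w ≠ 0)
    (h : det2 v w = 0) : Projectivization.mk k v hv = Projectivization.mk k w hw := by
  rw [Projectivization.mk_eq_mk_iff']
  have h' : v 0 * w 1 = v 1 * w 0 := by
    have h2 := h; unfold det2 at h2; linear_combination h2
  by_cases hw0 : w 0 = 0
  · have hw1 : w 1 ≠ 0 := (ne_zero_cases hw).resolve_left (not_not_intro hw0)
    have hv0 : v 0 = 0 := by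
      have h2 : v 0 * w 1 = 0 := by rw [h', hw0, mul_zero]
      exact (mul_eq_zero.mp h2).resolve_right hw1
    refine ⟨v 1 / w 1, funext fun i => ?_⟩
    fin_cases i
    · simp [hw0, hv0]
    · simp [div_mul_cancel₀ _ hw1]
  · have hv0 : v 0 ≠ 0 := by
      intro h0
      have h2 : v 1 * w 0 = 0 := by rw [← h', h0, zero_mul]
      have hv1 : v 1 = 0 := (mul_eq_zero.mp h2).resolve_right hw0
      exact hv (funext fun i => by fin_cases i <;> simp [h0, hv1])
    refine ⟨v 0 / w 0, funext fun i => ?_⟩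
    fin_cases i
    · simp [div_mul_cancel₀ _ hw0]
    · show v 0 / w 0 * w 1 = v 1
      rw [div_mul_eq_mul_div, div_eq_iff hw0]
      exact h'

private lemma det2_eq_zero_of_mk_eq {v w : Fin 2 → k} (hv : v ≠ 0) (hw : w ≠ 0)
    (h : Projectivization.mk k v hv = Projectivization.mk k w hw) : det2 v w = 0 := by
  obtain ⟨a, ha⟩ := (Projectivization.mk_eq_mk_iff' k v w hv hw).mp h
  have h0 : v 0 = a * w 0 := by rw [← ha]; simp
  have h1 : v 1 = a * w 1 := by rw [← ha]; simp
  unfold det2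
  rw [h0, h1]; ring

private lemma mk_smul_eq {v : Fin 2 → k} (hv : v ≠ 0) {c : k} (h' : c • v ≠ 0) :
    Projectivization.mk k (c • v) h' = Projectivization.mk k v hv :=
  (Projectivization.mk_eq_mk_iff' k _ _ h' hv).mpr ⟨c, rfl⟩

private lemma isBihom_mul {F G : BiPoly k} {d e : ℕ × ℕ}
    (hF : IsBihomogeneous F d) (hG : IsBihomogeneous G e) :
    IsBihomogeneous (F * G) (d + e) := by
  classical
  intro m hm
  have h := MvPolynomial.support_mul F G hm
  rw [Finset.mem_add] at h
  obtain ⟨mf, hmf, mg, hmg, rfl⟩ := h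
  obtain ⟨hf1, hf2⟩ := hF mf hmf
  obtain ⟨hg1, hg2⟩ := hG mg hmg
  constructor
  · simp only [Finsupp.add_apply, Finset.sum_add_distrib, hf1, hg1, Prod.fst_add]
  · simp only [Finsupp.add_apply, Finset.sum_add_distrib, hf2, hg2, Prod.snd_add]

private lemma isBihom_prod {ι : Type*} (s : Finset ι) (f : ι → BiPoly k) (d : ℕ × ℕ)
    (h : ∀ i ∈ s, IsBihomogeneous (f i) d) :
    IsBihomogeneous (∏ i ∈ s, f i) (s.card • d) := by
  classical
  induction s using Finset.induction with
  | empty =>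
      intro m hm
      rw [Finset.prod_empty, MvPolynomial.mem_support_iff, MvPolynomial.coeff_one] at hm
      have hm0 : (0 : (Fin 2 ⊕ Fin 2) →₀ ℕ) = m := by
        by_contra h'; simp [h'] at hm
      subst hm0
      simp
  | @insert a s hx ih =>
      rw [Finset.prod_insert hx]
      have h2 := isBihom_mul (h a (Finset.mem_insert_self a s))
        (ih fun i hi => h i (Finset.mem_insert_of_mem hi))
      have hc : d + s.card • d = (insert a s).card • d := by
        rw [Finset.card_insert_of_notMem hx, succ_nsmul, add_comm]
      rwa [hc] at h2

private noncomputable def linX (v : Fin 2 → k) : BiPoly k :=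
  MvPolynomial.C (v 0) * MvPolynomial.X (Sum.inl 1) -
    MvPolynomial.C (v 1) * MvPolynomial.X (Sum.inl 0)

private noncomputable def linY (v : Fin 2 → k) : BiPoly k :=
  MvPolynomial.C (v 0) * MvPolynomial.X (Sum.inr 1) -
    MvPolynomial.C (v 1) * MvPolynomial.X (Sum.inr 0)

private lemma eval_linX (v p q : Fin 2 → k) :
    MvPolynomial.eval (Sum.elim p q) (linX v) = det2 v p := by
  simp [linX, det2]

private lemma eval_linY (v p q : Fin 2 → k) :
    MvPolynomial.eval (Sum.elim p q) (linY v) = det2 v q := by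
  simp [linY, det2]

private lemma isBihom_monX (j : Fin 2) (c : k) :
    IsBihomogeneous (MvPolynomial.C c * MvPolynomial.X (Sum.inl j) : BiPoly k) (1, 0) := by
  classical
  intro m hm
  rw [MvPolynomial.C_mul_X_eq_monomial, MvPolynomial.support_monomial] at hm
  by_cases hc : c = 0
  · simp [hc] at hm
  · rw [if_neg hc, Finset.mem_singleton] at hm
    subst hm
    constructor
    · rw [Fin.sum_univ_two]
      fin_cases j <;> simp [Finsupp.single_apply]
    · rw [Fin.sum_univ_two]
      simp [Finsupp.single_apply]

private lemma isBihom_monY (j : Fin 2) (c : k) :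
    IsBihomogeneous (MvPolynomial.C c * MvPolynomial.X (Sum.inr j) : BiPoly k) (0, 1) := by
  classical
  intro m hm
  rw [MvPolynomial.C_mul_X_eq_monomial, MvPolynomial.support_monomial] at hm
  by_cases hc : c = 0
  · simp [hc] at hm
  · rw [if_neg hc, Finset.mem_singleton] at hm
    subst hm
    constructor
    · rw [Fin.sum_univ_two]
      simp [Finsupp.single_apply]
    · rw [Fin.sum_univ_two]
      fin_cases j <;> simp [Finsupp.single_apply]

private lemma isBihom_sub {F G : BiPoly k} {d : ℕ × ℕ} (hF : IsBihomogeneous F d)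
    (hG : IsBihomogeneous G d) : IsBihomogeneous (F - G) d := by
  classical
  intro m hm
  have h := MvPolynomial.support_sub _ F G hm
  rw [Finset.mem_union] at h
  rcases h with h | h
  exacts [hF m h, hG m h]

private lemma isBihom_linX (v : Fin 2 → k) : IsBihomogeneous (linX v) (1, 0) :=
  isBihom_sub (isBihom_monX 1 (v 0)) (isBihom_monX 0 (v 1))

private lemma isBihom_linY (v : Fin 2 → k) : IsBihomogeneous (linY v) (0, 1) :=
  isBihom_sub (isBihom_monY 1 (v 0)) (isBihom_monY 0 (v 1))

private lemma natDegree_linpow_le (a b : k) (n : ℕ) :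
    ((Polynomial.C a * Polynomial.X + Polynomial.C b) ^ n).natDegree ≤ n := by
  refine Polynomial.natDegree_pow_le.trans ?_
  have h1 : (Polynomial.C a * Polynomial.X + Polynomial.C b).natDegree ≤ 1 := by
    refine (Polynomial.natDegree_add_le _ _).trans (max_le ?_ ?_)
    · exact Polynomial.natDegree_mul_le.trans (by simp)
    · simp
  calc n * (Polynomial.C a * Polynomial.X + Polynomial.C b).natDegree ≤ n * 1 :=
        Nat.mul_le_mul_left n h1
  _ = n := mul_one n

private lemma coeff_linpow (a b : k) (n : ℕ) :
    ((Polynomial.C a * Polynomial.X + Polynomial.C b) ^ n).coeff n = a ^ n := by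
  rcases Nat.eq_zero_or_pos n with rfl | hn
  · simp
  by_cases ha : a = 0
  · subst ha
    rw [map_zero, zero_mul, zero_add, ← map_pow, Polynomial.coeff_C, if_neg hn.ne',
      zero_pow hn.ne']
  · have hdeg : (Polynomial.C a * Polynomial.X + Polynomial.C b).natDegree = 1 :=
      Polynomial.natDegree_linear ha
    have hlc : (Polynomial.C a * Polynomial.X + Polynomial.C b).leadingCoeff = a :=
      Polynomial.leadingCoeff_linear ha
    have hl : ((Polynomial.C a * Polynomial.X + Polynomial.C b) ^ n).natDegree = n := by
      rw [Polynomial.natDegree_pow' (by rw [hlc]; exact pow_ne_zero n ha), hdeg, mul_one]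
    have hthis : ((Polynomial.C a * Polynomial.X + Polynomial.C b) ^ n).coeff
        ((Polynomial.C a * Polynomial.X + Polynomial.C b) ^ n).natDegree = a ^ n := by
      rw [Polynomial.coeff_natDegree, Polynomial.leadingCoeff_pow, hlc]
    rwa [hl] at hthis

private lemma core_lemma {F : BiPoly k} {c dy : ℕ}
    (hbih : IsBihomogeneous F (c, dy))
    (u q : Fin 2 → k) (hu : u ≠ 0)
    (hF0 : MvPolynomial.eval (Sum.elim u q) F ≠ 0)
    (S : Finset (Proj1 k))
    (hS1 : ∀ P' ∈ S, P' ≠ Projectivization.mk k u hu)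
    (hS2 : ∀ P' ∈ S, ∀ (p : Fin 2 → k) (hp : p ≠ 0),
        Projectivization.mk k p hp = P' → MvPolynomial.eval (Sum.elim p q) F = 0) :
    S.card ≤ c := by
  classical
  set w : Fin 2 → k := if u 0 = 0 then ![1, 0] else ![0, 1] with hw
  have hdet_uw : det2 u w ≠ 0 := by
    by_cases h0 : u 0 = 0
    · have h1 : u 1 ≠ 0 := (ne_zero_cases hu).resolve_left (not_not_intro h0)
      unfold det2
      rw [hw, if_pos h0]
      simpa [h0] using h1
    · unfold det2
      rw [hw, if_neg h0]
      simpa using h0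
  set g : (Fin 2 ⊕ Fin 2) → Polynomial k :=
    Sum.elim (fun i => Polynomial.C (u i) * Polynomial.X + Polynomial.C (w i))
             (fun i => Polynomial.C (q i)) with hg
  set p : Polynomial k := MvPolynomial.eval₂ Polynomial.C g F with hpdef
  have heval : ∀ t : k, p.eval t = MvPolynomial.eval (Sum.elim (t • u + w) q) F := by
    intro t
    have h1 := MvPolynomial.eval₂_comp_left (Polynomial.evalRingHom t) Polynomial.C g F
    have h2 : (Polynomial.evalRingHom t).comp Polynomial.C = RingHom.id k := by
      ext x; simp
    have h3 : (Polynomial.evalRingHom t) ∘ g = Sum.elim (t • u + w) q := by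
      funext i
      cases i with
      | inl i =>
          simp only [hg, Function.comp_apply, Sum.elim_inl, Polynomial.coe_evalRingHom,
            Polynomial.eval_add, Polynomial.eval_mul, Polynomial.eval_C, Polynomial.eval_X,
            Pi.add_apply, Pi.smul_apply, smul_eq_mul]
          ring
      | inr i => simp [hg]
    calc p.eval t = (Polynomial.evalRingHom t) (MvPolynomial.eval₂ Polynomial.C g F) := rfl
    _ = MvPolynomial.eval₂ (RingHom.id k) (Sum.elim (t • u + w) q) F := by rw [h1, h2, h3]
    _ = _ := MvPolynomial.eval₂_id F
  have hrep : p = ∑ m ∈ F.support, Polynomial.C (F.coeff m) * ∏ i, g i ^ m i := by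
    rw [hpdef, MvPolynomial.eval₂_eq']
  have hdeg : p.natDegree ≤ c := by
    rw [hrep]
    apply Polynomial.natDegree_sum_le_of_forall_le
    intro m hm
    refine Polynomial.natDegree_mul_le.trans ?_
    rw [Polynomial.natDegree_C, zero_add]
    refine (Polynomial.natDegree_prod_le Finset.univ _).trans ?_
    rw [Fintype.sum_sum_type]
    have hxs : ∀ i : Fin 2, (g (Sum.inl i) ^ m (Sum.inl i)).natDegree ≤ m (Sum.inl i) := by
      intro i
      simp only [hg, Sum.elim_inl]
      exact natDegree_linpow_le _ _ _
    have hys : ∀ i : Fin 2, (g (Sum.inr i) ^ m (Sum.inr i)).natDegree = 0 := by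
      intro i
      simp only [hg, Sum.elim_inr, ← map_pow]
      exact Polynomial.natDegree_C _
    calc (∑ i : Fin 2, (g (Sum.inl i) ^ m (Sum.inl i)).natDegree)
          + ∑ i : Fin 2, (g (Sum.inr i) ^ m (Sum.inr i)).natDegree
        ≤ (∑ i : Fin 2, m (Sum.inl i)) + 0 := by
          apply add_le_add
          · exact Finset.sum_le_sum fun i _ => hxs i
          · simp [hys]
    _ = c := by rw [add_zero, (hbih m hm).1]
  have hcoeff : p.coeff c = MvPolynomial.eval (Sum.elim u q) F := by
    rw [hrep, Polynomial.finset_sum_coeff, MvPolynomial.eval_eq']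
    apply Finset.sum_congr rfl
    intro m hm
    have hc2 : m (Sum.inl 0) + m (Sum.inl 1) = c := by
      have := (hbih m hm).1; rwa [Fin.sum_univ_two] at this
    rw [Polynomial.coeff_C_mul, Fintype.prod_sum_type]
    have h2 : (∏ i : Fin 2, g (Sum.inr i) ^ m (Sum.inr i))
        = Polynomial.C (∏ i : Fin 2, q i ^ m (Sum.inr i)) := by
      rw [map_prod]
      apply Finset.prod_congr rfl
      intro i _
      rw [hg]
      simp [map_pow]
    rw [h2, mul_comm _ (Polynomial.C _), Polynomial.coeff_C_mul]
    have hA : ((∏ i : Fin 2, g (Sum.inl i) ^ m (Sum.inl i))).coeff c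
        = u 0 ^ m (Sum.inl 0) * u 1 ^ m (Sum.inl 1) := by
      rw [Fin.prod_univ_two, ← hc2,
        Polynomial.coeff_mul_add_eq_of_natDegree_le
          (by simp only [hg, Sum.elim_inl]; exact natDegree_linpow_le _ _ _)
          (by simp only [hg, Sum.elim_inl]; exact natDegree_linpow_le _ _ _)]
      simp only [hg, Sum.elim_inl]
      rw [coeff_linpow, coeff_linpow]
    rw [hA, Fintype.prod_sum_type]
    simp only [Sum.elim_inl, Sum.elim_inr, Fin.prod_univ_two]
    ring
  have hpne : p ≠ 0 := fun h => hF0 (by rw [← hcoeff, h, Polynomial.coeff_zero])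
  set f : Proj1 k → k :=
    fun P' => det2 (Projectivization.rep P') w / det2 u (Projectivization.rep P') with hf
  have hmain : ∀ P' ∈ S, f P' • u + w ≠ 0 ∧
      ∀ (h : f P' • u + w ≠ 0), Projectivization.mk k (f P' • u + w) h = P' := by
    intro P' hP'
    have hv : Projectivization.rep P' ≠ 0 := Projectivization.rep_nonzero P'
    have hβ : det2 u (Projectivization.rep P') ≠ 0 := by
      intro h0
      exact hS1 P' hP'
        (((mk_eq_of_det2 hu hv h0).trans (Projectivization.mk_rep P')).symm)
    have hβ' : u 0 * Projectivization.rep P' 1 - u 1 * Projectivization.rep P' 0 ≠ 0 := hβ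
    have hcomb : f P' • u + w
        = (det2 u w / det2 u (Projectivization.rep P')) • Projectivization.rep P' := by
      funext i
      fin_cases i
      · show f P' * u 0 + w 0
            = det2 u w / det2 u (Projectivization.rep P') * Projectivization.rep P' 0
        rw [hf]
        unfold det2
        simp only [div_mul_eq_mul_div]
        rw [div_add' _ _ _ hβ', div_left_inj' hβ']
        ring
      · show f P' * u 1 + w 1
            = det2 u w / det2 u (Projectivization.rep P') * Projectivization.rep P' 1
        rw [hf]
        unfold det2
        simp only [div_mul_eq_mul_div]
        rw [div_add' _ _ _ hβ', div_left_inj' hβ']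
        ring
    have hsc : det2 u w / det2 u (Projectivization.rep P') ≠ 0 := div_ne_zero hdet_uw hβ
    have hne : f P' • u + w ≠ 0 := by
      rw [hcomb]
      exact smul_ne_zero hsc hv
    refine ⟨hne, fun h => ?_⟩
    have : Projectivization.mk k (f P' • u + w) h
        = Projectivization.mk k (Projectivization.rep P') hv := by
      rw [← mk_smul_eq hv (h' := hcomb ▸ h)]
      congr 1
    exact this.trans (Projectivization.mk_rep P')
  have hroot : ∀ P' ∈ S, p.eval (f P') = 0 := by
    intro P' hP'
    obtain ⟨hne, hmk⟩ := hmain P' hP'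
    rw [heval]
    exact hS2 P' hP' _ hne (hmk hne)
  have hinj : Set.InjOn f S := by
    intro P1 h1 P2 h2 hf12
    obtain ⟨hne1, hmk1⟩ := hmain P1 (by exact_mod_cast h1)
    obtain ⟨hne2, hmk2⟩ := hmain P2 (by exact_mod_cast h2)
    rw [← hf12] at hmk2
    exact (hmk1 hne1).symm.trans (hmk2 hne1)
  have himg : S.image f ⊆ p.roots.toFinset := by
    intro t ht
    rw [Finset.mem_image] at ht
    obtain ⟨P', hP', rfl⟩ := ht
    rw [Multiset.mem_toFinset, Polynomial.mem_roots']
    exact ⟨hpne, hroot P' hP'⟩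
  calc S.card = (S.image f).card := (Finset.card_image_of_injOn hinj).symm
  _ ≤ p.roots.toFinset.card := Finset.card_le_card himg
  _ ≤ Multiset.card p.roots := Multiset.toFinset_card_le _
  _ ≤ p.natDegree := Polynomial.card_roots' p
  _ ≤ c := hdeg

private lemma isBihom_swap {F : BiPoly k} {c d : ℕ} (h : IsBihomogeneous F (c, d)) :
    IsBihomogeneous (MvPolynomial.rename Sum.swap F) (d, c) := by
  classical
  intro m hm
  rw [MvPolynomial.support_rename_of_injective Sum.swap_leftInverse.injective] at hm
  obtain ⟨m', hm', rfl⟩ := Finset.mem_image.mp hm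
  obtain ⟨h1, h2⟩ := h m' hm'
  constructor
  · have hval : ∀ i : Fin 2,
        (Finsupp.mapDomain Sum.swap m') (Sum.inl i) = m' (Sum.inr i) := fun i =>
      Finsupp.mapDomain_apply Sum.swap_leftInverse.injective m' (Sum.inr i)
    simp only [hval]
    exact h2
  · have hval : ∀ i : Fin 2,
        (Finsupp.mapDomain Sum.swap m') (Sum.inr i) = m' (Sum.inl i) := fun i =>
      Finsupp.mapDomain_apply Sum.swap_leftInverse.injective m' (Sum.inl i)
    simp only [hval]
    exact h1

private lemma lower_bound {X : Finset (Proj1 k × Proj1 k)} {P Q : Proj1 k}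
    (hPQ : (P, Q) ∈ X) {F : BiPoly k} {c d : ℕ}
    (hsep : IsSeparator X (P, Q) F (c, d)) :
    fiber2Card X Q - 1 ≤ c ∧ fiber1Card X P - 1 ≤ d := by
  classical
  obtain ⟨hbih, hnv, hvan⟩ := hsep
  unfold VanishesAt at hnv
  push_neg at hnv
  obtain ⟨u, q, hu, hq, hmu, hmq, hF0⟩ := hnv
  constructor
  · set S : Finset (Proj1 k) := ((X.filter fun T => T.2 = Q).erase (P, Q)).image Prod.fst
      with hS
    have hinj : Set.InjOn Prod.fst
        (↑((X.filter fun T => T.2 = Q).erase (P, Q)) : Set (Proj1 k × Proj1 k)) := by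
      intro T1 h1 T2 h2 h12
      rw [Finset.mem_coe] at h1 h2
      have e1 : T1.2 = Q := (Finset.mem_filter.mp (Finset.mem_of_mem_erase h1)).2
      have e2 : T2.2 = Q := (Finset.mem_filter.mp (Finset.mem_of_mem_erase h2)).2
      exact Prod.ext h12 (e1.trans e2.symm)
    have hmem : (P, Q) ∈ X.filter (fun T => T.2 = Q) := Finset.mem_filter.mpr ⟨hPQ, rfl⟩
    have hcard : fiber2Card X Q - 1 = S.card := by
      rw [hS, Finset.card_image_of_injOn hinj, Finset.card_erase_of_mem hmem]
      rfl
    rw [hcard]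
    refine core_lemma hbih u q hu hF0 S ?_ ?_
    · intro P' hP'
      rw [hS, Finset.mem_image] at hP'
      obtain ⟨T, hT, rfl⟩ := hP'
      have hTne : T ≠ (P, Q) := Finset.ne_of_mem_erase hT
      have hT2 : T.2 = Q := (Finset.mem_filter.mp (Finset.mem_of_mem_erase hT)).2
      have h1 : T.1 ≠ P := fun h => hTne (Prod.ext h hT2)
      rw [hmu]
      exact h1
    · intro P' hP' p hp hmp
      rw [hS, Finset.mem_image] at hP'
      obtain ⟨T, hT, rfl⟩ := hP'
      have hTne : T ≠ (P, Q) := Finset.ne_of_mem_erase hT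
      have hTX : T ∈ X := (Finset.mem_filter.mp (Finset.mem_of_mem_erase hT)).1
      have hT2 : T.2 = Q := (Finset.mem_filter.mp (Finset.mem_of_mem_erase hT)).2
      exact hvan T hTX hTne p q hp hq hmp (by rw [hT2]; exact hmq)
  · set S : Finset (Proj1 k) := ((X.filter fun T => T.1 = P).erase (P, Q)).image Prod.snd
      with hS
    have hinj : Set.InjOn Prod.snd
        (↑((X.filter fun T => T.1 = P).erase (P, Q)) : Set (Proj1 k × Proj1 k)) := by
      intro T1 h1 T2 h2 h12
      rw [Finset.mem_coe] at h1 h2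
      have e1 : T1.1 = P := (Finset.mem_filter.mp (Finset.mem_of_mem_erase h1)).2
      have e2 : T2.1 = P := (Finset.mem_filter.mp (Finset.mem_of_mem_erase h2)).2
      exact Prod.ext (e1.trans e2.symm) h12
    have hmem : (P, Q) ∈ X.filter (fun T => T.1 = P) := Finset.mem_filter.mpr ⟨hPQ, rfl⟩
    have hcard : fiber1Card X P - 1 = S.card := by
      rw [hS, Finset.card_image_of_injOn hinj, Finset.card_erase_of_mem hmem]
      rfl
    rw [hcard]
    have hcompswap : (Sum.elim q u) ∘ Sum.swap = Sum.elim u q :=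
      funext fun i => by cases i <;> rfl
    have hF0' : MvPolynomial.eval (Sum.elim q u) (MvPolynomial.rename Sum.swap F) ≠ 0 := by
      rw [MvPolynomial.eval_rename, hcompswap]
      exact hF0
    refine core_lemma (isBihom_swap hbih) q u hq hF0' S ?_ ?_
    · intro Q' hQ'
      rw [hS, Finset.mem_image] at hQ'
      obtain ⟨T, hT, rfl⟩ := hQ'
      have hTne : T ≠ (P, Q) := Finset.ne_of_mem_erase hT
      have hT1 : T.1 = P := (Finset.mem_filter.mp (Finset.mem_of_mem_erase hT)).2
      have h1 : T.2 ≠ Q := fun h => hTne (Prod.ext hT1 h)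
      rw [hmq]
      exact h1
    · intro Q' hQ' p' hp' hmp'
      rw [hS, Finset.mem_image] at hQ'
      obtain ⟨T, hT, rfl⟩ := hQ'
      have hTne : T ≠ (P, Q) := Finset.ne_of_mem_erase hT
      have hTX : T ∈ X := (Finset.mem_filter.mp (Finset.mem_of_mem_erase hT)).1
      have hT1 : T.1 = P := (Finset.mem_filter.mp (Finset.mem_of_mem_erase hT)).2
      have hswap : (Sum.elim p' u) ∘ Sum.swap = Sum.elim u p' :=
        funext fun i => by cases i <;> rfl
      rw [MvPolynomial.eval_rename, hswap]
      exact hvan T hTX hTne u p' hu hp' (by rw [hT1]; exact hmu) hmp'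

private lemma upper_exists {X : Finset (Proj1 k × Proj1 k)} (hstar : PropertyStar X)
    {P Q : Proj1 k} (hPQ : (P, Q) ∈ X) :
    (fiber2Card X Q - 1, fiber1Card X P - 1) ∈ sepDegrees X (P, Q) := by
  classical
  set S2 : Finset (Proj1 k × Proj1 k) := (X.filter fun T => T.2 = Q).erase (P, Q) with hS2
  set S1 : Finset (Proj1 k × Proj1 k) := (X.filter fun T => T.1 = P).erase (P, Q) with hS1
  have hmem2 : (P, Q) ∈ X.filter (fun T => T.2 = Q) := Finset.mem_filter.mpr ⟨hPQ, rfl⟩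
  have hc2 : S2.card = fiber2Card X Q - 1 := by
    rw [hS2, Finset.card_erase_of_mem hmem2]
    rfl
  have hmem1 : (P, Q) ∈ X.filter (fun T => T.1 = P) := Finset.mem_filter.mpr ⟨hPQ, rfl⟩
  have hc1 : S1.card = fiber1Card X P - 1 := by
    rw [hS1, Finset.card_erase_of_mem hmem1]
    rfl
  refine ⟨(∏ T ∈ S2, linX (Projectivization.rep T.1)) *
    (∏ T ∈ S1, linY (Projectivization.rep T.2)), ?_, ?_, ?_⟩
  · -- bihomogeneous of the right bidegree
    have h2 := isBihom_prod S2 (fun T => linX (Projectivization.rep T.1)) (1, 0)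
      (fun T _ => isBihom_linX _)
    have h1 := isBihom_prod S1 (fun T => linY (Projectivization.rep T.2)) (0, 1)
      (fun T _ => isBihom_linY _)
    have h := isBihom_mul h2 h1
    have hcards : S2.card • ((1 : ℕ), (0 : ℕ)) + S1.card • ((0 : ℕ), (1 : ℕ))
        = (fiber2Card X Q - 1, fiber1Card X P - 1) := by
      rw [← hc2, ← hc1]
      simp [Prod.ext_iff]
    rwa [hcards] at h
  · -- does not vanish at (P, Q)
    intro hvan
    have h := hvan (Projectivization.rep P) (Projectivization.rep Q)
      (Projectivization.rep_nonzero P) (Projectivization.rep_nonzero Q)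
      (Projectivization.mk_rep P) (Projectivization.mk_rep Q)
    rw [map_mul, map_prod, map_prod] at h
    simp only [eval_linX, eval_linY] at h
    rcases mul_eq_zero.mp h with h | h
    · obtain ⟨T, hT, hz⟩ := Finset.prod_eq_zero_iff.mp h
      have hTne : T ≠ (P, Q) := Finset.ne_of_mem_erase hT
      have hT2 : T.2 = Q := (Finset.mem_filter.mp (Finset.mem_of_mem_erase hT)).2
      have : T.1 = P := by
        have hmk := mk_eq_of_det2 (Projectivization.rep_nonzero T.1)
          (Projectivization.rep_nonzero P) hz
        rwa [Projectivization.mk_rep, Projectivization.mk_rep] at hmk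
      exact hTne (Prod.ext this hT2)
    · obtain ⟨T, hT, hz⟩ := Finset.prod_eq_zero_iff.mp h
      have hTne : T ≠ (P, Q) := Finset.ne_of_mem_erase hT
      have hT1 : T.1 = P := (Finset.mem_filter.mp (Finset.mem_of_mem_erase hT)).2
      have : T.2 = Q := by
        have hmk := mk_eq_of_det2 (Projectivization.rep_nonzero T.2)
          (Projectivization.rep_nonzero Q) hz
        rwa [Projectivization.mk_rep, Projectivization.mk_rep] at hmk
      exact hTne (Prod.ext hT1 this)
  · -- vanishes at all other points
    rintro ⟨P', Q'⟩ hT hTne p q hp hq hmp hmq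
    rw [map_mul, map_prod, map_prod]
    simp only [eval_linX, eval_linY]
    simp only [] at hmp hmq
    by_cases hP' : P' = P
    · have hQ' : Q' ≠ Q := fun h => hTne (by rw [hP', h])
      apply mul_eq_zero_of_right
      refine Finset.prod_eq_zero (i := (P', Q')) ?_ ?_
      · rw [hS1, Finset.mem_erase]
        exact ⟨by simp [Prod.ext_iff, hQ'], Finset.mem_filter.mpr ⟨hT, hP'⟩⟩
      · exact det2_eq_zero_of_mk_eq _ hq ((Projectivization.mk_rep Q').trans hmq.symm)
    · by_cases hQ' : Q' = Q
      · apply mul_eq_zero_of_left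
        refine Finset.prod_eq_zero (i := (P', Q')) ?_ ?_
        · rw [hS2, Finset.mem_erase]
          exact ⟨by simp [Prod.ext_iff, hP'], Finset.mem_filter.mpr ⟨hT, hQ'⟩⟩
        · exact det2_eq_zero_of_mk_eq _ hp ((Projectivization.mk_rep P').trans hmp.symm)
      · rcases hstar P Q P' Q' hPQ hT (fun h => hP' h.symm) (fun h => hQ' h.symm) with
          hA | hB
        · apply mul_eq_zero_of_right
          refine Finset.prod_eq_zero (i := ((P : Proj1 k), Q')) ?_ ?_
          · rw [hS1, Finset.mem_erase]
            exact ⟨by simp [Prod.ext_iff, hQ'], Finset.mem_filter.mpr ⟨hA, rfl⟩⟩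
          · exact det2_eq_zero_of_mk_eq _ hq ((Projectivization.mk_rep Q').trans hmq.symm)
        · apply mul_eq_zero_of_left
          refine Finset.prod_eq_zero (i := (P', (Q : Proj1 k))) ?_ ?_
          · rw [hS2, Finset.mem_erase]
            exact ⟨by simp [Prod.ext_iff, hP'], Finset.mem_filter.mpr ⟨hB, rfl⟩⟩
          · exact det2_eq_zero_of_mk_eq _ hp ((Projectivization.mk_rep P').trans hmp.symm)

end AuxStarProof

/-- If `X` satisfies property (*) and `P×Q ∈ X`, then `deg_X(P×Q) = {(a-1, b-1)}`
where `a = |X_{Q,2}|` and `b = |X_{P,1}|`. -/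
theorem degree_of_point_in_star_set [IsAlgClosed k] [CharZero k]
    (X : Finset (Proj1 k × Proj1 k)) (hstar : PropertyStar X)
    (P Q : Proj1 k) (hPQ : (P, Q) ∈ X) (a b : ℕ)
    (ha : a = fiber2Card X Q) (hb : b = fiber1Card X P) :
    degSet X (P, Q) = {(a - 1, b - 1)} := by
  subst ha hb
  have hupper := upper_exists hstar hPQ
  have hlow : ∀ e ∈ sepDegrees X (P, Q),
      (fiber2Card X Q - 1, fiber1Card X P - 1) ≤ e := by
    rintro ⟨c, d⟩ ⟨F, hsep⟩
    exact Prod.mk_le_mk.mpr (lower_bound hPQ hsep)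
  ext e
  simp only [Set.mem_singleton_iff]
  constructor
  · rintro ⟨he, hmin⟩
    exact (hmin _ hupper (hlow e he)).symm
  · rintro rfl
    exact ⟨hupper, fun e he hle => le_antisymm hle (hlow e he)⟩
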